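/- Let (Ω, ℱ, P) be a probability space. Let X : Ω → 𝒳, Z : Ω → 𝒵, and ν : Ω → 𝒩 be measurable maps into standard Borel spaces, let 𝒟 be a countable type, let U : 𝒟 → Ω → ℝ be a family of measurable random variables, and let q : ℝ × 𝒟 × 𝒳 → ℝ be measurable. Define the potential outcomes Y_d := q(U_d, d, X) for each d ∈ 𝒟. Assume: (A1) for each d ∈ 𝒟 and each τ ∈ [0,1], E[1{U_d ≤ τ} | σ(X)] = τ P-a.s.; (A2) for each d ∈ 𝒟, U_d and Z are conditionally independent given σ(X); (A3) D : Ω → 𝒟 is measurable with respect to σ(X, Z, ν); (A4, rank similarity) for all d, d' ∈ 𝒟 and all τ ∈ [0,1], E[1{U_d ≤ τ} | σ(X, Z, ν)] = E[1{U_{d'} ≤ τ} | σ(X, Z, ν)] P-a.s. Define U := U_D (i.e., U(ω) = U_{D(ω)}(ω)) and Y := Y_D = q(U_D, D, X). Then Y = q(U, D, X) pointwise and, for every τ ∈ [0,1], E[1{U ≤ τ} | σ(X, Z)] = τ P-almost surely; that is, U is uniformly distributed on (0,1) conditionally on (X, Z). -/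

import Mathlib

open MeasureTheory ProbabilityTheory

/-- Auxiliary step: if `E[1{W ≤ τ} | σ(X)] = τ` a.s. and `W` is conditionally independent
of `Z` given `σ(X)`, then `P(s ∩ {W ≤ τ}) = τ · P(s)` for every `σ(X,Z)`-measurable `s`. -/
lemma ivqr_aux_rect
    {Ω 𝒳 𝒵 : Type*} [mΩ : MeasurableSpace Ω] [StandardBorelSpace Ω]
    [MeasurableSpace 𝒳] [MeasurableSpace 𝒵]
    (P : Measure Ω) [IsProbabilityMeasure P]
    (X : Ω → 𝒳) (Z : Ω → 𝒵) (hX : Measurable X) (hZ : Measurable Z)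
    (W : Ω → ℝ) (hW : Measurable W) (τ : ℝ)
    (h1 : P[(fun ω => if W ω ≤ τ then (1 : ℝ) else 0)
        | MeasurableSpace.comap X inferInstance] =ᵐ[P] fun _ => τ)
    (h2 : CondIndepFun (MeasurableSpace.comap X inferInstance) hX.comap_le W Z P) :
    ∀ s : Set Ω, MeasurableSet[MeasurableSpace.comap (fun ω => (X ω, Z ω)) inferInstance] s →
      (P (s ∩ W ⁻¹' Set.Iic τ)).toReal = τ * (P s).toReal := by
  classical
  set T : Set Ω := W ⁻¹' Set.Iic τ with hTdef
  have hT : MeasurableSet T := hW measurableSet_Iic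
  have hmX : (MeasurableSpace.comap X inferInstance : MeasurableSpace Ω) ≤ mΩ := hX.comap_le
  have hm₁ : (MeasurableSpace.comap (fun ω => (X ω, Z ω)) inferInstance : MeasurableSpace Ω)
      ≤ mΩ := (hX.prodMk hZ).comap_le
  have hfun : (fun ω => if W ω ≤ τ then (1 : ℝ) else 0)
      = Set.indicator T fun ω => (1 : ℝ) := by
    funext ω
    by_cases h : W ω ≤ τ <;>
      simp [Set.indicator_apply, hTdef, Set.mem_preimage, Set.mem_Iic, h]
  rw [hfun] at h1
  -- total mass : P T = τ
  have hPT : (P T).toReal = τ := by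
    have h3 : ∫ ω, (P[Set.indicator T (fun ω => (1:ℝ)) | MeasurableSpace.comap X inferInstance]) ω ∂P
        = τ := by
      rw [integral_congr_ae h1]
      simp
    rw [integral_condExp hmX, integral_indicator hT, setIntegral_const, smul_eq_mul, mul_one]
      at h3
    exact h3
  -- product formula from conditional independence
  have hmul := (condIndepFun_iff_condExp_inter_preimage_eq_mul hW hZ).mp h2
  -- generating π-system
  have hgen : (MeasurableSpace.comap (fun ω => (X ω, Z ω)) inferInstance : MeasurableSpace Ω)
      = MeasurableSpace.generateFrom
        (Set.preimage (fun ω => (X ω, Z ω)) ''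
          Set.image2 (· ×ˢ ·) { s : Set 𝒳 | MeasurableSet s } { t : Set 𝒵 | MeasurableSet t }) := by
    conv_lhs => rw [show (inferInstance : MeasurableSpace (𝒳 × 𝒵)) = Prod.instMeasurableSpace from rfl,
      ← generateFrom_prod]
    rw [MeasurableSpace.comap_generateFrom]
  have hpi : IsPiSystem
      (Set.preimage (fun ω => (X ω, Z ω)) ''
        Set.image2 (· ×ˢ ·) { s : Set 𝒳 | MeasurableSet s } { t : Set 𝒵 | MeasurableSet t }) :=
    isPiSystem_prod.comap _
  intro s hs
  refine @MeasurableSpace.induction_on_inter Ω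
    (MeasurableSpace.comap (fun ω => (X ω, Z ω)) inferInstance)
    (fun s _ => (P (s ∩ T)).toReal = τ * (P s).toReal) _ hgen hpi ?_ ?_ ?_ ?_ s hs
  · simp
  · -- rectangles
    rintro t ⟨r, hr, rfl⟩
    rw [Set.mem_image2] at hr
    obtain ⟨A, hA, B, hB, rfl⟩ := hr
    have hpre : (fun ω => (X ω, Z ω)) ⁻¹' (A ×ˢ B) = X ⁻¹' A ∩ Z ⁻¹' B :=
      Set.mk_preimage_prod X Z
    rw [hpre]
    have hXA : MeasurableSet[MeasurableSpace.comap X inferInstance] (X ⁻¹' A) := ⟨A, hA, rfl⟩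
    have hTB : MeasurableSet (T ∩ Z ⁻¹' B) := hT.inter (hZ hB)
    have hint : Integrable (Set.indicator (T ∩ Z ⁻¹' B) fun ω => (1:ℝ)) P :=
      (integrable_const (1:ℝ)).indicator hTB
    have hintB : Integrable (Set.indicator (Z ⁻¹' B) fun ω => (1:ℝ)) P :=
      (integrable_const (1:ℝ)).indicator (hZ hB)
    have e1 : ∫ ω in X ⁻¹' A,
        (P⟦T ∩ Z ⁻¹' B | MeasurableSpace.comap X inferInstance⟧) ω ∂P
        = (P ((X ⁻¹' A ∩ Z ⁻¹' B) ∩ T)).toReal := by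
      rw [setIntegral_condExp hmX hint hXA, setIntegral_indicator hTB, setIntegral_const,
        smul_eq_mul, mul_one, Measure.real]
      have hset : X ⁻¹' A ∩ (T ∩ Z ⁻¹' B) = (X ⁻¹' A ∩ Z ⁻¹' B) ∩ T := by
        ext ω; simp only [Set.mem_inter_iff]; tauto
      rw [hset]
    have hmul' := hmul (Set.Iic τ) B measurableSet_Iic hB
    have h1' : (fun ω => (P⟦W ⁻¹' Set.Iic τ | MeasurableSpace.comap X inferInstance⟧) ω
          * (P⟦Z ⁻¹' B | MeasurableSpace.comap X inferInstance⟧) ω)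
        =ᵐ[P] fun ω => τ * (P⟦Z ⁻¹' B | MeasurableSpace.comap X inferInstance⟧) ω := by
      filter_upwards [h1] with ω hω
      rw [← hTdef] at *
      simp only [hω]
    have e2 : ∫ ω in X ⁻¹' A,
        (P⟦T ∩ Z ⁻¹' B | MeasurableSpace.comap X inferInstance⟧) ω ∂P
        = τ * (P (X ⁻¹' A ∩ Z ⁻¹' B)).toReal := by
      rw [integral_congr_ae (ae_restrict_of_ae hmul'),
        integral_congr_ae (ae_restrict_of_ae h1'), integral_const_mul,
        setIntegral_condExp hmX hintB hXA, setIntegral_indicator (hZ hB), setIntegral_const,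
        smul_eq_mul, mul_one, Measure.real]
    rw [← e1, e2]
  · -- complements
    intro t ht hCt
    have htm : MeasurableSet t := hm₁ t ht
    have key : (P (T ∩ t)).toReal + (P (T \ t)).toReal = (P T).toReal := by
      rw [← ENNReal.toReal_add (measure_ne_top _ _) (measure_ne_top _ _),
        measure_inter_add_diff T htm]
    have hcompl : (P tᶜ).toReal = 1 - (P t).toReal := by
      have : (P t).toReal + (P tᶜ).toReal = 1 := by
        rw [← ENNReal.toReal_add (measure_ne_top _ _) (measure_ne_top _ _),
          measure_add_measure_compl htm, measure_univ, ENNReal.toReal_one]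
      linarith
    have hiter : tᶜ ∩ T = T \ t := by
      rw [Set.diff_eq, Set.inter_comm]
    have hitc : (P (T ∩ t)).toReal = τ * (P t).toReal := by
      rw [Set.inter_comm]; exact hCt
    rw [hiter, hcompl]
    linarith [hPT]
  · -- countable disjoint unions
    intro f hdisj hmeas hC
    have hmA : ∀ i, MeasurableSet (f i) := fun i => hm₁ _ (hmeas i)
    have e1 : P ((⋃ i, f i) ∩ T) = ∑' i, P (f i ∩ T) := by
      rw [Set.iUnion_inter]
      exact measure_iUnion
        (hdisj.mono fun i j h =>
          Disjoint.mono Set.inter_subset_left Set.inter_subset_left h)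
        (fun i => (hmA i).inter hT)
    have e2 : P (⋃ i, f i) = ∑' i, P (f i) := measure_iUnion hdisj hmA
    rw [e1, e2, ENNReal.tsum_toReal_eq (fun _ => measure_ne_top _ _),
      ENNReal.tsum_toReal_eq (fun _ => measure_ne_top _ _), ← tsum_mul_left]
    exact tsum_congr hC


/-- Theorem 1(i) of the IVQR model (Chernozhukov–Hansen–Wüthrich): under the potential
outcomes representation (A1), conditional independence of ranks and instruments (A2),
the selection representation (A3), and rank similarity (A4), the observed outcome satisfies
`Y = q(U, D, X)` with `U := U_D` uniformly distributed on `(0,1)` conditionally on `(X, Z)`. -/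
theorem ivqr_main_implication
    {Ω 𝒳 𝒵 𝒩 : Type*} [mΩ : MeasurableSpace Ω] [StandardBorelSpace Ω] [Nonempty Ω]
    [MeasurableSpace 𝒳] [StandardBorelSpace 𝒳]
    [MeasurableSpace 𝒵] [StandardBorelSpace 𝒵]
    [MeasurableSpace 𝒩] [StandardBorelSpace 𝒩]
    {𝒟 : Type*} [MeasurableSpace 𝒟] [MeasurableSingletonClass 𝒟] [Countable 𝒟]
    (P : Measure Ω) [IsProbabilityMeasure P]
    (X : Ω → 𝒳) (Z : Ω → 𝒵) (ν : Ω → 𝒩)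
    (hX : Measurable X) (hZ : Measurable Z) (hν : Measurable ν)
    (U : 𝒟 → Ω → ℝ) (hU : ∀ d, Measurable (U d))
    (q : ℝ → 𝒟 → 𝒳 → ℝ) (hq : Measurable fun p : ℝ × 𝒟 × 𝒳 => q p.1 p.2.1 p.2.2)
    -- potential outcomes `Y_d = q(U_d, d, X)`
    (Yp : 𝒟 → Ω → ℝ) (hYp : ∀ d ω, Yp d ω = q (U d ω) d (X ω))
    -- A1: conditional on `X`, each `U_d` is uniform on `(0,1)`
    (hA1 : ∀ d : 𝒟, ∀ τ ∈ Set.Icc (0 : ℝ) 1,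
      P[(fun ω => if U d ω ≤ τ then (1 : ℝ) else 0)
          | MeasurableSpace.comap X inferInstance] =ᵐ[P] fun _ => τ)
    -- A2: conditional on `X`, each `U_d` is independent of `Z`
    (hA2 : ∀ d : 𝒟,
      CondIndepFun (MeasurableSpace.comap X inferInstance) (hX.comap_le) (U d) Z P)
    -- A3: selection, `D = δ(Z, X, ν)`, i.e., `D` is `σ(X, Z, ν)`-measurable
    (D : Ω → 𝒟)
    (hA3 : @Measurable Ω 𝒟 (MeasurableSpace.comap (fun ω => (X ω, Z ω, ν ω)) inferInstance) _ D)
    -- A4: rank similarity, conditional on `(X, Z, ν)` the `U_d` are identically distributed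
    (hA4 : ∀ d d' : 𝒟, ∀ τ ∈ Set.Icc (0 : ℝ) 1,
      P[(fun ω => if U d ω ≤ τ then (1 : ℝ) else 0)
          | MeasurableSpace.comap (fun ω => (X ω, Z ω, ν ω)) inferInstance]
        =ᵐ[P]
      P[(fun ω => if U d' ω ≤ τ then (1 : ℝ) else 0)
          | MeasurableSpace.comap (fun ω => (X ω, Z ω, ν ω)) inferInstance])
    -- observed outcome `Y := Y_D`
    (Y : Ω → ℝ) (hY : ∀ ω, Y ω = Yp (D ω) ω) :
    (∀ ω, Y ω = q (U (D ω) ω) (D ω) (X ω)) ∧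
    (∀ τ ∈ Set.Icc (0 : ℝ) 1,
      P[(fun ω => if U (D ω) ω ≤ τ then (1 : ℝ) else 0)
          | MeasurableSpace.comap (fun ω => (X ω, Z ω)) inferInstance] =ᵐ[P] fun _ => τ) := by
  classical
  refine ⟨fun ω => by rw [hY, hYp], ?_⟩
  intro τ hτ
  obtain ⟨ω₀⟩ := (inferInstance : Nonempty Ω)
  set d0 : 𝒟 := D ω₀ with hd0
  -- σ-algebras
  have hm₁ : (MeasurableSpace.comap (fun ω => (X ω, Z ω)) inferInstance : MeasurableSpace Ω)
      ≤ mΩ := (hX.prodMk hZ).comap_le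
  have hm₂ : (MeasurableSpace.comap (fun ω => (X ω, Z ω, ν ω)) inferInstance :
      MeasurableSpace Ω) ≤ mΩ := (hX.prodMk (hZ.prodMk hν)).comap_le
  have hm₁₂ : (MeasurableSpace.comap (fun ω => (X ω, Z ω)) inferInstance : MeasurableSpace Ω)
      ≤ MeasurableSpace.comap (fun ω => (X ω, Z ω, ν ω)) inferInstance := by
    rw [show (fun ω => (X ω, Z ω))
        = (fun p : 𝒳 × 𝒵 × 𝒩 => (p.1, p.2.1)) ∘ (fun ω => (X ω, Z ω, ν ω)) from rfl,
      ← MeasurableSpace.comap_comp]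
    exact MeasurableSpace.comap_mono
      (measurable_fst.prodMk (measurable_fst.comp measurable_snd)).comap_le
  -- basic sets
  set T : Set Ω := U d0 ⁻¹' Set.Iic τ with hTdef
  have hT : MeasurableSet T := (hU d0) measurableSet_Iic
  set S : Set Ω := ⋃ d, D ⁻¹' {d} ∩ U d ⁻¹' Set.Iic τ with hSdef
  have hDd : ∀ d : 𝒟, MeasurableSet (D ⁻¹' {d}) :=
    fun d => hm₂ _ (hA3 (measurableSet_singleton d))
  have hDd₂ : ∀ d : 𝒟, MeasurableSet[MeasurableSpace.comap
      (fun ω => (X ω, Z ω, ν ω)) inferInstance] (D ⁻¹' {d}) :=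
    fun d => hA3 (measurableSet_singleton d)
  have hS : MeasurableSet S :=
    MeasurableSet.iUnion fun d => (hDd d).inter ((hU d) measurableSet_Iic)
  have hmemS : ∀ ω, ω ∈ S ↔ U (D ω) ω ≤ τ := by
    intro ω
    simp only [hSdef, Set.mem_iUnion, Set.mem_inter_iff, Set.mem_preimage,
      Set.mem_singleton_iff, Set.mem_Iic]
    exact ⟨fun ⟨d, hd, h⟩ => hd ▸ h, fun h => ⟨D ω, rfl, h⟩⟩
  have hfeq : (fun ω => if U (D ω) ω ≤ τ then (1 : ℝ) else 0)
      = Set.indicator S fun ω => (1 : ℝ) := by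
    funext ω
    by_cases h : U (D ω) ω ≤ τ <;> simp [Set.indicator_apply, hmemS ω, h]
  -- ite as indicator, for each d
  have hiteq : ∀ d : 𝒟, (fun ω => if U d ω ≤ τ then (1 : ℝ) else 0)
      = Set.indicator (U d ⁻¹' Set.Iic τ) fun ω => (1 : ℝ) := by
    intro d; funext ω
    by_cases h : U d ω ≤ τ <;>
      simp [Set.indicator_apply, Set.mem_preimage, Set.mem_Iic, h]
  -- Step A : rank similarity + selection ⟹ P (s ∩ S) = P (s ∩ T) for s ∈ σ(X,Z,ν)
  have keyA : ∀ s : Set Ω, MeasurableSet[MeasurableSpace.comap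
      (fun ω => (X ω, Z ω, ν ω)) inferInstance] s → P (s ∩ S) = P (s ∩ T) := by
    intro s hs
    have hsA : MeasurableSet s := hm₂ _ hs
    have e1 : P (s ∩ S) = ∑' d, P (s ∩ (D ⁻¹' {d} ∩ U d ⁻¹' Set.Iic τ)) := by
      rw [show s ∩ S = ⋃ d, s ∩ (D ⁻¹' {d} ∩ U d ⁻¹' Set.Iic τ) from by
        rw [hSdef, Set.inter_iUnion]]
      exact measure_iUnion
        (fun d d' hne => by
          simp only [Function.onFun, Set.disjoint_left]
          rintro ω ⟨-, h1, -⟩ ⟨-, h2, -⟩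
          simp only [Set.mem_preimage, Set.mem_singleton_iff] at h1 h2
          exact hne (h1.symm.trans h2))
        (fun d => hsA.inter ((hDd d).inter ((hU d) measurableSet_Iic)))
    have e2 : P (s ∩ T) = ∑' d, P (s ∩ (D ⁻¹' {d} ∩ T)) := by
      rw [show s ∩ T = ⋃ d, s ∩ (D ⁻¹' {d} ∩ T) from by
        ext ω
        simp only [Set.mem_iUnion, Set.mem_inter_iff, Set.mem_preimage,
          Set.mem_singleton_iff]
        exact ⟨fun ⟨h1, h2⟩ => ⟨D ω, h1, rfl, h2⟩, fun ⟨d, h1, _, h2⟩ => ⟨h1, h2⟩⟩]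
      exact measure_iUnion
        (fun d d' hne => by
          simp only [Function.onFun, Set.disjoint_left]
          rintro ω ⟨-, h1, -⟩ ⟨-, h2, -⟩
          simp only [Set.mem_preimage, Set.mem_singleton_iff] at h1 h2
          exact hne (h1.symm.trans h2))
        (fun d => hsA.inter ((hDd d).inter hT))
    rw [e1, e2]
    refine tsum_congr fun d => ?_
    -- termwise equality via A4
    have hA4' : P[Set.indicator (U d ⁻¹' Set.Iic τ) (fun ω => (1:ℝ))
          | MeasurableSpace.comap (fun ω => (X ω, Z ω, ν ω)) inferInstance]
        =ᵐ[P] P[Set.indicator T (fun ω => (1:ℝ))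
          | MeasurableSpace.comap (fun ω => (X ω, Z ω, ν ω)) inferInstance] := by
      have := hA4 d d0 τ hτ
      rwa [hiteq d, hiteq d0, ← hTdef] at this
    have hA' : MeasurableSet[MeasurableSpace.comap
        (fun ω => (X ω, Z ω, ν ω)) inferInstance] (s ∩ D ⁻¹' {d}) := hs.inter (hDd₂ d)
    have hAamb : MeasurableSet (s ∩ D ⁻¹' {d}) := hsA.inter (hDd d)
    have hintd : Integrable (Set.indicator (U d ⁻¹' Set.Iic τ) fun ω => (1:ℝ)) P :=
      (integrable_const (1:ℝ)).indicator ((hU d) measurableSet_Iic)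
    have hintT : Integrable (Set.indicator T fun ω => (1:ℝ)) P :=
      (integrable_const (1:ℝ)).indicator hT
    have c1 : ∫ ω in s ∩ D ⁻¹' {d}, (Set.indicator (U d ⁻¹' Set.Iic τ) fun ω => (1:ℝ)) ω ∂P
        = (P ((s ∩ D ⁻¹' {d}) ∩ U d ⁻¹' Set.Iic τ)).toReal := by
      rw [setIntegral_indicator ((hU d) measurableSet_Iic), setIntegral_const,
        smul_eq_mul, mul_one, Measure.real]
    have c2 : ∫ ω in s ∩ D ⁻¹' {d}, (Set.indicator T fun ω => (1:ℝ)) ω ∂P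
        = (P ((s ∩ D ⁻¹' {d}) ∩ T)).toReal := by
      rw [setIntegral_indicator hT, setIntegral_const, smul_eq_mul, mul_one, Measure.real]
    have c3 : ∫ ω in s ∩ D ⁻¹' {d}, (Set.indicator (U d ⁻¹' Set.Iic τ) fun ω => (1:ℝ)) ω ∂P
        = ∫ ω in s ∩ D ⁻¹' {d}, (Set.indicator T fun ω => (1:ℝ)) ω ∂P := by
      rw [← setIntegral_condExp hm₂ hintd hA', ← setIntegral_condExp hm₂ hintT hA']
      exact integral_congr_ae (ae_restrict_of_ae hA4')
    have h' : (P (s ∩ (D ⁻¹' {d} ∩ U d ⁻¹' Set.Iic τ))).toReal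
        = (P (s ∩ (D ⁻¹' {d} ∩ T))).toReal := by
      rw [← Set.inter_assoc, ← Set.inter_assoc]
      exact c1 ▸ c2 ▸ c3
    exact (ENNReal.toReal_eq_toReal_iff' (measure_ne_top _ _) (measure_ne_top _ _)).mp h'
  -- Step B : A1 + A2 ⟹ P (s ∩ T) = τ P(s) for s ∈ σ(X,Z)
  have keyB := ivqr_aux_rect P X Z hX hZ (U d0) (hU d0) τ
    (hA1 d0 τ hτ) (hA2 d0)
  -- combined key
  have key : ∀ s : Set Ω, MeasurableSet[MeasurableSpace.comap
      (fun ω => (X ω, Z ω)) inferInstance] s →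
      (P (s ∩ S)).toReal = τ * (P s).toReal := by
    intro s hs
    rw [keyA s (hm₁₂ s hs)]
    exact keyB s hs
  -- conclude via uniqueness of conditional expectation
  have hfint : Integrable (fun ω => if U (D ω) ω ≤ τ then (1 : ℝ) else 0) P := by
    rw [hfeq]; exact (integrable_const (1:ℝ)).indicator hS
  refine (ae_eq_condExp_of_forall_setIntegral_eq hm₁ hfint
    (fun s _ _ => integrableOn_const (measure_ne_top P s))
    (fun s hs _ => ?_)
    (StronglyMeasurable.aestronglyMeasurable stronglyMeasurable_const)).symm
  rw [setIntegral_const, smul_eq_mul, hfeq, setIntegral_indicator hS, setIntegral_const,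
    smul_eq_mul, mul_one, Measure.real, Measure.real, key s hs, mul_comm]
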